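/- Let 0 < α < 1/2 and B(x,y) = x^α y^α. Let a, b_1, …, b_M be points in the first quadrant with xy ≥ 1 at each point, and suppose a = Σ_i λ_i b_i with λ_i ≥ c_1 > 0, Σ λ_i = 1, and suppose that for each i and each t ∈ [0, 1/2], the point (1−t)a + t b_i has first coordinate ≥ (1/2)a_1 and ≤ C a_1 and second coordinate ≥ (1/2)a_2 and ≤ C a_2. Then B(a) − Σ_i λ_i B(b_i) ≥ c(α, C, c_1) · (a_1 a_2)^α · Σ_i λ_i ( (b_{i,1} − a_1)²/a_1² + (b_{i,2} − a_2)²/a_2² ). -/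

import Mathlib

open Real


/-- Strong concavity of `s ^ β` on `(0, T]`. -/
lemma keyA (β T : ℝ) (hβ0 : 0 < β) (hβ1 : β < 1) (hT : 1 ≤ T) {s : ℝ}
    (hs0 : 0 < s) (hsT : s ≤ T) :
    s ^ β ≤ 1 + β * (s - 1) - β * (1 - β) * T ^ (β - 2) / 2 * (s - 1) ^ 2 := by
  set m : ℝ := β * (1 - β) * T ^ (β - 2) with hm
  have hT0 : (0:ℝ) < T := lt_of_lt_of_le one_pos hT
  have hm0 : 0 < m := by
    have h := rpow_pos_of_pos hT0 (β - 2)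
    exact mul_pos (mul_pos hβ0 (by linarith)) h
  set φ : ℝ → ℝ := fun s => 1 + β * (s - 1) - m / 2 * (s - 1) ^ 2 - s ^ β with hφ
  set ψ : ℝ → ℝ := fun s => β - m * (s - 1) - β * s ^ (β - 1) with hψ
  have hφd : ∀ x : ℝ, 0 < x → HasDerivAt φ (ψ x) x := by
    intro x hx
    have h1 : HasDerivAt (fun s : ℝ => s ^ β) (β * x ^ (β - 1)) x :=
      hasDerivAt_rpow_const (Or.inl hx.ne')
    have h2 : HasDerivAt (fun s : ℝ => 1 + β * (s - 1) - m / 2 * (s - 1) ^ 2)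
        (β - m * (x - 1)) x := by
      have h := ((((hasDerivAt_id x).sub_const 1).const_mul β).const_add 1).sub
          ((((hasDerivAt_id x).sub_const 1).pow 2).const_mul (m / 2))
      have e : β - m * (x - 1) = β * 1 - m / 2 * (↑2 * (id x - 1) ^ (2 - 1) * 1) := by
        push_cast [id_eq]; ring
      rw [e]; exact h
    exact h2.sub h1
  have hψd : ∀ x : ℝ, 0 < x → HasDerivAt ψ (-m - β * ((β - 1) * x ^ (β - 2))) x := by
    intro x hx
    have h1 : HasDerivAt (fun s : ℝ => s ^ (β - 1)) ((β - 1) * x ^ (β - 1 - 1)) x :=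
      hasDerivAt_rpow_const (Or.inl hx.ne')
    have h2 : HasDerivAt (fun s : ℝ => β - m * (s - 1))
        (0 - m * 1) x :=
      (hasDerivAt_const x β).sub (((hasDerivAt_id x).sub_const 1).const_mul m)
    have h := h2.sub (h1.const_mul β)
    have e : -m - β * ((β - 1) * x ^ (β - 2)) = 0 - m * 1 - β * ((β - 1) * x ^ (β - 1 - 1)) := by
      rw [show β - 1 - 1 = β - 2 by ring]; ring
    rw [e]; exact h
  -- ψ is monotone on Ioc 0 T
  have hψmono : MonotoneOn ψ (Set.Ioc 0 T) := by
    apply monotoneOn_of_deriv_nonneg (convex_Ioc 0 T)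
    · intro x hx
      exact ((hψd x hx.1).continuousAt).continuousWithinAt
    · intro x hx
      rw [interior_Ioc] at hx
      exact ((hψd x hx.1).differentiableAt).differentiableWithinAt
    · intro x hx
      rw [interior_Ioc] at hx
      rw [(hψd x hx.1).deriv]
      have hle : T ^ (β - 2) ≤ x ^ (β - 2) :=
        rpow_le_rpow_of_nonpos hx.1 hx.2.le (by linarith)
      have : m ≤ β * (1 - β) * x ^ (β - 2) := by
        apply mul_le_mul_of_nonneg_left hle (by nlinarith)
      nlinarith
  have hψ1 : ψ 1 = 0 := by simp [hψ]
  have hφ1 : φ 1 = 0 := by simp [hφ]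
  rcases le_total s 1 with h | h
  · -- φ antitone on Ioc 0 1
    have hanti : AntitoneOn φ (Set.Ioc 0 1) := by
      apply antitoneOn_of_deriv_nonpos (convex_Ioc 0 1)
      · intro x hx; exact ((hφd x hx.1).continuousAt).continuousWithinAt
      · intro x hx
        rw [interior_Ioc] at hx
        exact ((hφd x hx.1).differentiableAt).differentiableWithinAt
      · intro x hx
        rw [interior_Ioc] at hx
        rw [(hφd x hx.1).deriv]
        have := hψmono ⟨hx.1, by linarith [hx.2, hT]⟩ ⟨one_pos, hT⟩ hx.2.le
        linarith [hψ1]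
    have := hanti ⟨hs0, h⟩ ⟨one_pos, le_refl 1⟩ h
    rw [hφ1] at this
    simp only [hφ] at this; linarith
  · -- φ monotone on Icc 1 T
    have hmono : MonotoneOn φ (Set.Icc 1 T) := by
      apply monotoneOn_of_deriv_nonneg (convex_Icc 1 T)
      · intro x hx; exact ((hφd x (by linarith [hx.1])).continuousAt).continuousWithinAt
      · intro x hx
        rw [interior_Icc] at hx
        exact ((hφd x (by linarith [hx.1])).differentiableAt).differentiableWithinAt
      · intro x hx
        rw [interior_Icc] at hx
        rw [(hφd x (by linarith [hx.1])).deriv]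
        have := hψmono ⟨one_pos, hT⟩ ⟨by linarith [hx.1], hx.2.le⟩ hx.1.le
        linarith [hψ1]
    have := hmono ⟨le_refl 1, hT⟩ ⟨h, hsT⟩ h
    rw [hφ1] at this
    simp only [hφ] at this; linarith

lemma keyB (α T : ℝ) (hα0 : 0 < α) (hα : α < 1 / 2) (hT : 1 ≤ T) {x y : ℝ}
    (hx0 : 0 < x) (hy0 : 0 < y) (hxT : x ≤ T) (hyT : y ≤ T) :
    x ^ α * y ^ α ≤ 1 + α * ((x - 1) + (y - 1))
      - 2 * α * (1 - 2 * α) * T ^ (2 * α - 2) / 4 * ((x - 1) ^ 2 + (y - 1) ^ 2) := by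
  have hβ0 : 0 < 2 * α := by linarith
  have hβ1 : 2 * α < 1 := by linarith
  have hx2 : x ^ (2 * α) = (x ^ α) ^ 2 := by
    rw [show (2:ℝ) * α = α * 2 by ring, rpow_mul hx0.le, rpow_two]
  have hy2 : y ^ (2 * α) = (y ^ α) ^ 2 := by
    rw [show (2:ℝ) * α = α * 2 by ring, rpow_mul hy0.le, rpow_two]
  have hA := keyA (2 * α) T hβ0 hβ1 hT hx0 hxT
  have hB := keyA (2 * α) T hβ0 hβ1 hT hy0 hyT
  rw [hx2] at hA
  rw [hy2] at hB
  nlinarith [sq_nonneg (x ^ α - y ^ α)]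
/-- key convexity step for `B(x,y) = x^α y^α`: the concavity defect
at a convex combination dominates the normalized quadratic deviation. -/
theorem bellman_convexity_step
    (α C c₁ : ℝ) (hα0 : 0 < α) (hα : α < 1 / 2) (hC : 1 ≤ C) (hc₁ : 0 < c₁) :
    ∃ c : ℝ, 0 < c ∧
      ∀ (M : ℕ) (a : ℝ × ℝ) (b : Fin M → ℝ × ℝ) (lam : Fin M → ℝ),
        (0 < a.1 ∧ 0 < a.2 ∧ 1 ≤ a.1 * a.2) →
        (∀ i, 0 < (b i).1 ∧ 0 < (b i).2 ∧ 1 ≤ (b i).1 * (b i).2) →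
        (∀ i, c₁ ≤ lam i) → (∑ i, lam i = 1) →
        (a.1 = ∑ i, lam i * (b i).1) → (a.2 = ∑ i, lam i * (b i).2) →
        (∀ i, ∀ t : ℝ, 0 ≤ t → t ≤ 1 / 2 →
          a.1 / 2 ≤ (1 - t) * a.1 + t * (b i).1 ∧
          (1 - t) * a.1 + t * (b i).1 ≤ C * a.1 ∧
          a.2 / 2 ≤ (1 - t) * a.2 + t * (b i).2 ∧
          (1 - t) * a.2 + t * (b i).2 ≤ C * a.2) →
        a.1 ^ α * a.2 ^ α - ∑ i, lam i * ((b i).1 ^ α * (b i).2 ^ α)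
          ≥ c * (a.1 * a.2) ^ α *
              ∑ i, lam i * (((b i).1 - a.1) ^ 2 / a.1 ^ 2
                + ((b i).2 - a.2) ^ 2 / a.2 ^ 2) := by
  have h2C : (1:ℝ) ≤ 2 * C - 1 := by linarith
  have hT0 : (0:ℝ) < 2 * C - 1 := by linarith
  refine ⟨2 * α * (1 - 2 * α) * (2 * C - 1) ^ (2 * α - 2) / 4, ?_, ?_⟩
  · have h := rpow_pos_of_pos hT0 (2 * α - 2)
    have h1 : (0:ℝ) < 1 - 2 * α := by linarith
    positivity
  · intro M a b lam ha hb hlam hsum h1 h2 hseg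
    obtain ⟨ha1, ha2, -⟩ := ha
    set c0 : ℝ := 2 * α * (1 - 2 * α) * (2 * C - 1) ^ (2 * α - 2) / 4 with hc0
    set A : ℝ := a.1 ^ α * a.2 ^ α with hAdef
    have hA : (a.1 * a.2) ^ α = A := mul_rpow ha1.le ha2.le
    have hA0 : 0 < A := by
      have := rpow_pos_of_pos ha1 α; have := rpow_pos_of_pos ha2 α; positivity
    set p : Fin M → ℝ := fun i => ((b i).1 - a.1) / a.1 with hp
    set q : Fin M → ℝ := fun i => ((b i).2 - a.2) / a.2 with hq
    set r : Fin M → ℝ := fun i =>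
      ((b i).1 - a.1) ^ 2 / a.1 ^ 2 + ((b i).2 - a.2) ^ 2 / a.2 ^ 2 with hr
    have key : ∀ i, lam i * ((b i).1 ^ α * (b i).2 ^ α)
        ≤ lam i * (A * (1 + α * (p i + q i) - c0 * r i)) := by
      intro i
      have hb1 := (hb i).1
      have hb2 := (hb i).2.1
      have hx0 : 0 < (b i).1 / a.1 := div_pos hb1 ha1
      have hy0 : 0 < (b i).2 / a.2 := div_pos hb2 ha2
      have hs := hseg i (1/2) (by norm_num) (le_refl _)
      have hxT : (b i).1 / a.1 ≤ 2 * C - 1 := by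
        rw [div_le_iff₀ ha1]; nlinarith [hs.2.1]
      have hyT : (b i).2 / a.2 ≤ 2 * C - 1 := by
        rw [div_le_iff₀ ha2]; nlinarith [hs.2.2.2]
      have hK := keyB α (2 * C - 1) hα0 hα h2C hx0 hy0 hxT hyT
      have e1 : (b i).1 ^ α = a.1 ^ α * ((b i).1 / a.1) ^ α := by
        rw [← mul_rpow ha1.le hx0.le, mul_comm, div_mul_cancel₀ _ ha1.ne']
      have e2 : (b i).2 ^ α = a.2 ^ α * ((b i).2 / a.2) ^ α := by
        rw [← mul_rpow ha2.le hy0.le, mul_comm, div_mul_cancel₀ _ ha2.ne']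
      have ed1 : (b i).1 / a.1 - 1 = p i := by rw [hp]; field_simp
      have ed2 : (b i).2 / a.2 - 1 = q i := by rw [hq]; field_simp
      have eq1 : ((b i).1 / a.1 - 1) ^ 2 = ((b i).1 - a.1) ^ 2 / a.1 ^ 2 := by
        rw [ed1, hp]; rw [div_pow]
      have eq2 : ((b i).2 / a.2 - 1) ^ 2 = ((b i).2 - a.2) ^ 2 / a.2 ^ 2 := by
        rw [ed2, hq]; rw [div_pow]
      have hlami : 0 ≤ lam i := le_trans hc₁.le (hlam i)
      apply mul_le_mul_of_nonneg_left _ hlami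
      calc (b i).1 ^ α * (b i).2 ^ α
          = A * (((b i).1 / a.1) ^ α * ((b i).2 / a.2) ^ α) := by
            rw [e1, e2, hAdef]; ring
        _ ≤ A * (1 + α * (p i + q i) - c0 * r i) := by
            apply mul_le_mul_of_nonneg_left _ hA0.le
            rw [hr]
            calc ((b i).1 / a.1) ^ α * ((b i).2 / a.2) ^ α
                ≤ 1 + α * (((b i).1 / a.1 - 1) + ((b i).2 / a.2 - 1))
                  - c0 * (((b i).1 / a.1 - 1) ^ 2 + ((b i).2 / a.2 - 1) ^ 2) := hK
              _ = 1 + α * (p i + q i)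
                  - c0 * (((b i).1 - a.1) ^ 2 / a.1 ^ 2 + ((b i).2 - a.2) ^ 2 / a.2 ^ 2) := by
                  rw [eq1, eq2, ed1, ed2]
    have hsum_le := Finset.sum_le_sum (fun i (_ : i ∈ Finset.univ) => key i)
    have hP : ∑ i, lam i * p i = 0 := by
      have e : ∀ i, lam i * p i = (lam i * (b i).1) / a.1 - lam i := by
        intro i; rw [hp]; field_simp
      rw [Finset.sum_congr rfl (fun i _ => e i), Finset.sum_sub_distrib, ← Finset.sum_div,
        ← h1, hsum, div_self ha1.ne', sub_self]
    have hQ : ∑ i, lam i * q i = 0 := by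
      have e : ∀ i, lam i * q i = (lam i * (b i).2) / a.2 - lam i := by
        intro i; rw [hq]; field_simp
      rw [Finset.sum_congr rfl (fun i _ => e i), Finset.sum_sub_distrib, ← Finset.sum_div,
        ← h2, hsum, div_self ha2.ne', sub_self]
    have expand : ∑ i, lam i * (A * (1 + α * (p i + q i) - c0 * r i))
        = A * (∑ i, lam i) + A * α * (∑ i, lam i * p i) + A * α * (∑ i, lam i * q i)
          - A * c0 * (∑ i, lam i * r i) := by
      rw [Finset.mul_sum, Finset.mul_sum, Finset.mul_sum, Finset.mul_sum,
        ← Finset.sum_add_distrib, ← Finset.sum_add_distrib, ← Finset.sum_sub_distrib]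
      exact Finset.sum_congr rfl (fun i _ => by ring)
    rw [expand, hP, hQ, hsum] at hsum_le
    rw [ge_iff_le, hA]
    have e : c0 * A * (∑ i, lam i * r i) = A * c0 * (∑ i, lam i * r i) := by ring
    have hrgoal : ∑ i, lam i * (((b i).1 - a.1) ^ 2 / a.1 ^ 2 + ((b i).2 - a.2) ^ 2 / a.2 ^ 2)
        = ∑ i, lam i * r i := rfl
    rw [hrgoal]
    linarith
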